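/- The 4-element poset N with elements {p, q, r, s}, relations p < r, q < r, q < s, and no other relations, is not isomorphic to the poset of meet-irreducible proper elements of any finite atomic lattice. -/

import Mathlib

/-- Meet-irreducible proper elements of a bounded lattice. -/
def MeetIrred (L : Type*) [Lattice L] [BoundedOrder L] : Set L :=
  {l | l ≠ ⊥ ∧ l ≠ ⊤ ∧ ∀ a b : L, l = a ⊓ b → l = a ∨ l = b}

/-- The order relation of the 4-element poset `N` on `{p,q,r,s} = {0,1,2,3}`:
`p < r`, `q < r`, `q < s`, and no other strict relations. -/
def Nrel (x y : Fin 4) : Prop :=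
  x = y ∨ (x = 0 ∧ y = 2) ∨ (x = 1 ∧ y = 2) ∨ (x = 1 ∧ y = 3)

/-- The poset `N` is not isomorphic to the poset of meet-irreducible proper
elements of any finite atomic lattice. -/
theorem stmt10 {L : Type*} [CompleteLattice L] [Fintype L] [IsAtomistic L] :
    ¬ ∃ f : ↥(MeetIrred L) → Fin 4, Function.Bijective f ∧
        ∀ x y : ↥(MeetIrred L), x ≤ y ↔ Nrel (f x) (f y) := by
  rintro ⟨f, ⟨finj, fsurj⟩, hf⟩
  obtain ⟨P, hP⟩ := fsurj 0
  obtain ⟨Q, hQ⟩ := fsurj 1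
  obtain ⟨R, hR⟩ := fsurj 2
  obtain ⟨S, hS⟩ := fsurj 3
  -- order facts
  have hQS : (Q : L) ≤ S := by
    have : Q ≤ S := (hf Q S).2 (by simp [Nrel, hQ, hS])
    exact this
  have hPR : (P : L) ≤ R := (hf P R).2 (by simp [Nrel, hP, hR])
  have hQR : (Q : L) ≤ R := (hf Q R).2 (by simp [Nrel, hQ, hR])
  have hSR : ¬ (S : L) ≤ R := by
    intro h
    have := (hf S R).1 h
    simp [Nrel, hS, hR] at this
  -- get an atom below S not below R
  obtain ⟨As, hSsup, hAs⟩ := eq_sSup_atoms (S : L)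
  have hex : ∃ a ∈ As, ¬ (a ≤ (R : L)) := by
    by_contra h
    push_neg at h
    exact hSR (hSsup ▸ sSup_le h)
  obtain ⟨a, haAs, haR⟩ := hex
  have hatom : IsAtom a := hAs a haAs
  have haS : a ≤ (S : L) := hSsup ▸ le_sSup haAs
  -- decompose a into inf-irreducibles
  obtain ⟨s, hsinf, hsirr⟩ := exists_infIrred_decomposition a
  -- every element of s equals S
  have hall : ∀ b ∈ s, b = (S : L) := by
    intro b hb
    have hirr := hsirr hb
    by_cases hbb : b = ⊥
    · exfalso
      have : a ≤ b := hsinf ▸ Finset.inf_le hb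
      exact hatom.1 (le_bot_iff.1 (hbb ▸ this))
    · have hbmi : b ∈ MeetIrred L := by
        refine ⟨hbb, ?_, ?_⟩
        · intro hbt
          exact hirr.1 (hbt ▸ isMax_top)
        · intro x y hxy
          rcases hirr.2 hxy.symm with h | h
          · exact Or.inl h.symm
          · exact Or.inr h.symm
      have hab : a ≤ b := hsinf ▸ Finset.inf_le hb
      -- b is one of P, Q, R, S
      have hcase : f ⟨b, hbmi⟩ = 0 ∨ f ⟨b, hbmi⟩ = 1 ∨ f ⟨b, hbmi⟩ = 2 ∨ f ⟨b, hbmi⟩ = 3 := by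
        have h4 := (f ⟨b, hbmi⟩).isLt
        simp only [Fin.ext_iff]
        omega
      rcases hcase with h | h | h | h
      · have hb' : b = (P : L) := congrArg Subtype.val (finj (h.trans hP.symm))
        exact absurd (le_trans hab (hb' ▸ hPR)) haR
      · have hb' : b = (Q : L) := congrArg Subtype.val (finj (h.trans hQ.symm))
        exact absurd (le_trans hab (hb' ▸ hQR)) haR
      · have hb' : b = (R : L) := congrArg Subtype.val (finj (h.trans hR.symm))
        exact absurd (le_trans hab hb'.le) haR
      · exact congrArg Subtype.val (finj (h.trans hS.symm))
  have hS_le_a : (S : L) ≤ a := by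
    rw [← hsinf]
    exact Finset.le_inf fun b hb => (hall b hb).ge
  have haSeq : a = (S : L) := le_antisymm haS hS_le_a
  -- Q < S contradicts S being an atom
  have hQS' : (Q : L) ≠ (S : L) := by
    intro h
    exact hSR (h ▸ hQR)
  have : (Q : L) = ⊥ := (haSeq ▸ hatom).2 _ (lt_of_le_of_ne hQS hQS')
  exact Q.2.1 this
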